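/- Let P be a finite set of points in R^d, F a j-dimensional affine flat, o a point on F, and u a point in R^d with projection Proj(u) onto F distinct from o. Define u_p = |<p - o, (Proj(u)-o)/||Proj(u)-o||>| for each p ∈ P, and h² = (1/|P|)·Σ_{p∈P} u_p². Let F' be the flat obtained by rotating F about the (j-1)-dimensional subflat through o orthogonal (within F) to Proj(u)-o, by an angle θ with tan θ ≤ Δ/h, for some Δ > 0. Then, setting δ_{P,F}² = (1/|P|)·Σ_{p∈P} dist(p, F)² and similarly for F', one has δ_{P,F'} ≤ δ_{P,F} + Δ. -/

import Mathlib

open Finset Metric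
open scoped RealInnerProductSpace

lemma sqrt_sum_sq_add_le {α : Type*} (P : Finset α) (a b : α → ℝ) :
    Real.sqrt (∑ p ∈ P, (a p + b p) ^ 2)
      ≤ Real.sqrt (∑ p ∈ P, a p ^ 2) + Real.sqrt (∑ p ∈ P, b p ^ 2) := by
  set A := Real.sqrt (∑ p ∈ P, a p ^ 2)
  set B := Real.sqrt (∑ p ∈ P, b p ^ 2)
  have hA : 0 ≤ A := Real.sqrt_nonneg _
  have hB : 0 ≤ B := Real.sqrt_nonneg _
  have h1 : (∑ p ∈ P, (a p + b p) ^ 2) ≤ (A + B) ^ 2 := by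
    have hC : ∑ p ∈ P, a p * b p ≤ A * B := Real.sum_mul_le_sqrt_mul_sqrt P a b
    have hA2 : A ^ 2 = ∑ p ∈ P, a p ^ 2 :=
      Real.sq_sqrt (Finset.sum_nonneg fun p _ => sq_nonneg _)
    have hB2 : B ^ 2 = ∑ p ∈ P, b p ^ 2 :=
      Real.sq_sqrt (Finset.sum_nonneg fun p _ => sq_nonneg _)
    calc ∑ p ∈ P, (a p + b p) ^ 2
        = (∑ p ∈ P, a p ^ 2) + 2 * (∑ p ∈ P, a p * b p) + (∑ p ∈ P, b p ^ 2) := by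
          simp_rw [add_sq, mul_assoc]
          rw [Finset.sum_add_distrib, Finset.sum_add_distrib, ← Finset.mul_sum]
      _ ≤ A ^ 2 + 2 * (A * B) + B ^ 2 := by rw [hA2, hB2]; nlinarith
      _ = (A + B) ^ 2 := by ring
  calc Real.sqrt (∑ p ∈ P, (a p + b p) ^ 2) ≤ Real.sqrt ((A + B) ^ 2) :=
        Real.sqrt_le_sqrt h1
    _ = A + B := Real.sqrt_sq (by positivity)

set_option maxHeartbeats 1000000 in
theorem delta_rotation_lemma (d j : ℕ)
    (P : Finset (EuclideanSpace ℝ (Fin d))) (hP : P.Nonempty)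
    (F : AffineSubspace ℝ (EuclideanSpace ℝ (Fin d)))
    (hFdim : Module.finrank ℝ F.direction = j)
    (o : EuclideanSpace ℝ (Fin d)) (ho : o ∈ F)
    (u pu : EuclideanSpace ℝ (Fin d)) (hpu : pu ∈ F)
    (hproj : ∀ v ∈ F.direction, ⟪u - pu, v⟫ = 0)
    (hne : pu ≠ o)
    (Δ : ℝ) (hΔ : 0 < Δ) (h : ℝ)
    (hh : h = Real.sqrt ((∑ p ∈ P, |⟪p - o, ‖pu - o‖⁻¹ • (pu - o)⟫| ^ 2) / P.card))
    (hhpos : 0 < h)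
    (htan : Real.tan (InnerProductGeometry.angle (u - o) (pu - o)) ≤ Δ / h)
    (F' : AffineSubspace ℝ (EuclideanSpace ℝ (Fin d)))
    (hF' : F' = AffineSubspace.mk' o
      (Submodule.span ℝ {u - o} ⊔ (F.direction ⊓ (Submodule.span ℝ {pu - o})ᗮ))) :
    Real.sqrt ((∑ p ∈ P, infDist p (F' : Set (EuclideanSpace ℝ (Fin d))) ^ 2) / P.card)
      ≤ Real.sqrt ((∑ p ∈ P, infDist p (F : Set (EuclideanSpace ℝ (Fin d))) ^ 2) / P.card)
        + Δ := by
  classical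
  let E := EuclideanSpace ℝ (Fin d)
  show Real.sqrt ((∑ p ∈ P, infDist p (F' : Set E) ^ 2) / P.card)
      ≤ Real.sqrt ((∑ p ∈ P, infDist p (F : Set E) ^ 2) / P.card) + Δ
  haveI : Nonempty F := ⟨⟨o, ho⟩⟩
  have hoF' : o ∈ F' := by rw [hF']; exact AffineSubspace.self_mem_mk' _ _
  set w : E := pu - o with hw_def
  set v : E := u - o with hv_def
  have hw0 : w ≠ 0 := sub_ne_zero.mpr hne
  have hwn : (0:ℝ) < ‖w‖ := norm_pos_iff.mpr hw0
  have hwF : w ∈ F.direction := by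
    have := AffineSubspace.vsub_mem_direction hpu ho
    simpa [vsub_eq_sub] using this
  have hvw : ⟪v, w⟫ = ‖w‖ ^ 2 := by
    have h1 : ⟪u - pu, w⟫ = 0 := hproj w hwF
    have h2 : v = (u - pu) + w := by rw [hv_def, hw_def]; abel
    rw [h2, inner_add_left, h1, zero_add, real_inner_self_eq_norm_sq]
  have hv0 : v ≠ 0 := by
    intro h0
    rw [h0, inner_zero_left] at hvw
    nlinarith
  have hvn : (0:ℝ) < ‖v‖ := norm_pos_iff.mpr hv0
  set θ := InnerProductGeometry.angle v w with hθ_def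
  have hcos : Real.cos θ = ‖w‖ / ‖v‖ := by
    rw [hθ_def, InnerProductGeometry.cos_angle, hvw]
    field_simp
  have hcospos : 0 < Real.cos θ := by rw [hcos]; positivity
  have hcos1 : Real.cos θ ≤ 1 := Real.cos_le_one θ
  have hsin : 0 ≤ Real.sin θ :=
    Real.sin_nonneg_of_nonneg_of_le_pi (InnerProductGeometry.angle_nonneg v w)
      (InnerProductGeometry.angle_le_pi v w)
  set T := Real.tan θ with hT_def
  have hT0 : 0 ≤ T := by
    rw [hT_def, Real.tan_eq_sin_div_cos]; positivity
  set vh : E := ‖v‖⁻¹ • v with hvh_def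
  set wh : E := ‖w‖⁻¹ • w with hwh_def
  have hvh1 : ‖vh‖ = 1 := by
    rw [hvh_def, norm_smul, norm_inv, norm_norm, inv_mul_cancel₀ hvn.ne']
  have hwh1 : ‖wh‖ = 1 := by
    rw [hwh_def, norm_smul, norm_inv, norm_norm, inv_mul_cancel₀ hwn.ne']
  have hinner_units : ⟪vh, wh⟫ = Real.cos θ := by
    rw [hvh_def, hwh_def, real_inner_smul_left, real_inner_smul_right, hθ_def,
      InnerProductGeometry.cos_angle]
    field_simp
  have hkey : ‖vh - wh‖ ≤ T := by
    have h2 : ‖vh - wh‖ ^ 2 = 2 - 2 * Real.cos θ := by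
      rw [norm_sub_sq_real, hvh1, hwh1, hinner_units]; ring
    have h3 : 2 - 2 * Real.cos θ ≤ T ^ 2 := by
      rw [hT_def, Real.tan_eq_sin_div_cos, div_pow]
      rw [le_div_iff₀ (by positivity)]
      have hs2 : Real.sin θ ^ 2 = 1 - Real.cos θ ^ 2 := Real.sin_sq θ
      nlinarith [sq_nonneg (1 - Real.cos θ)]
    calc ‖vh - wh‖ = Real.sqrt (‖vh - wh‖ ^ 2) := (Real.sqrt_sq (norm_nonneg (vh - wh : EuclideanSpace ℝ (Fin d)))).symm
      _ ≤ Real.sqrt (T ^ 2) := Real.sqrt_le_sqrt (by rw [h2]; exact h3)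
      _ = T := Real.sqrt_sq hT0
  set sfun : E → ℝ := fun p => ⟪p - o, wh⟫ with hsfun_def
  -- pointwise bound
  have pointwise : ∀ p : E, infDist p (F' : Set E) ≤ infDist p (F : Set E) + |sfun p| * T := by
    intro p
    set q : E := (EuclideanGeometry.orthogonalProjection F p : E) with hq_def
    have hqF : q ∈ F := EuclideanGeometry.orthogonalProjection_mem p
    have hpq_orth : p - q ∈ F.directionᗮ := by
      have := EuclideanGeometry.vsub_orthogonalProjection_mem_direction_orthogonal F p
      simpa [vsub_eq_sub, hq_def] using this
    have hdist_eq : dist p q = infDist p (F : Set E) := by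
      refine le_antisymm ?_ (infDist_le_dist_of_mem hqF)
      by_contra hlt
      push_neg at hlt
      obtain ⟨y, hyF, hy⟩ := (infDist_lt_iff ⟨o, ho⟩).mp hlt
      have hpyth := EuclideanGeometry.dist_sq_eq_dist_orthogonalProjection_sq_add_dist_orthogonalProjection_sq
        (s := F) p hyF
      rw [← hq_def] at hpyth
      have h1 : dist p q ≤ dist y p := by nlinarith [dist_nonneg (x := y) (y := p), dist_nonneg (x := y) (y := q), dist_nonneg (x := p) (y := q)]
      rw [dist_comm y p] at h1
      linarith
    set s := sfun p with hs_def
    set q' : E := q + s • (vh - wh) with hq'_def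
    have hq'F' : q' ∈ F' := by
      rw [hF', AffineSubspace.mem_mk', vsub_eq_sub]
      have hdecomp : q' - o = s • vh + ((q - o) - s • wh) := by
        rw [hq'_def, smul_sub]; abel
      rw [hdecomp]
      refine Submodule.add_mem_sup ?_ ?_
      · rw [hvh_def, smul_smul]
        exact Submodule.smul_mem _ _ (Submodule.mem_span_singleton_self v)
      · refine Submodule.mem_inf.mpr ⟨?_, ?_⟩
        · refine Submodule.sub_mem _ ?_ ?_
          · have := AffineSubspace.vsub_mem_direction hqF ho
            simpa [vsub_eq_sub] using this
          · exact Submodule.smul_mem _ _ (Submodule.smul_mem _ _ hwF)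
        · rw [Submodule.mem_orthogonal_singleton_iff_inner_right]
          have e1 : ⟪w, wh⟫ = ‖w‖ := by
            rw [hwh_def, real_inner_smul_right, real_inner_self_eq_norm_sq]
            field_simp
          have e2 : ⟪w, p - q⟫ = 0 :=
            Submodule.inner_right_of_mem_orthogonal hwF hpq_orth
          have e3 : ⟪w, p - o⟫ = ‖w‖ * s := by
            rw [hs_def, hsfun_def]
            simp only [hwh_def, real_inner_smul_right]
            rw [real_inner_comm]
            field_simp
          have e4 : q - o = (p - o) - (p - q) := by abel
          rw [inner_sub_right, real_inner_smul_right, e1, e4, inner_sub_right, e2, e3]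
          ring
    calc infDist p (F' : Set E) ≤ dist p q' := infDist_le_dist_of_mem hq'F'
      _ ≤ dist p q + |s| * ‖vh - wh‖ := by
          rw [dist_eq_norm, dist_eq_norm, hq'_def]
          have : p - (q + s • (vh - wh)) = (p - q) - s • (vh - wh) := by abel
          rw [this]
          refine (norm_sub_le _ _).trans ?_
          rw [norm_smul, Real.norm_eq_abs]
      _ ≤ infDist p (F : Set E) + |s| * T := by
          rw [hdist_eq]
          exact add_le_add_right (mul_le_mul_of_nonneg_left hkey (abs_nonneg _)) _
  -- aggregation
  set n : ℝ := (P.card : ℝ) with hn_def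
  have hn : (0:ℝ) < n := by
    rw [hn_def]; exact_mod_cast Finset.card_pos.mpr hP
  set a : E → ℝ := fun p => infDist p (F : Set E) with ha_def
  set b : E → ℝ := fun p => |sfun p| * T with hb_def
  have hsum1 : (∑ p ∈ P, infDist p (F' : Set E) ^ 2) ≤ ∑ p ∈ P, (a p + b p) ^ 2 :=
    Finset.sum_le_sum fun p _ => pow_le_pow_left₀ infDist_nonneg (pointwise p) 2
  set A := Real.sqrt (∑ p ∈ P, a p ^ 2) with hA_def
  set B := Real.sqrt (∑ p ∈ P, b p ^ 2) with hB_def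
  have hBval : B = T * Real.sqrt (∑ p ∈ P, |sfun p| ^ 2) := by
    rw [hB_def]
    have : ∑ p ∈ P, b p ^ 2 = T ^ 2 * ∑ p ∈ P, |sfun p| ^ 2 := by
      rw [Finset.mul_sum]
      exact Finset.sum_congr rfl fun p _ => by rw [hb_def]; ring
    rw [this, Real.sqrt_mul (sq_nonneg T), Real.sqrt_sq hT0]
  have hBn : B / Real.sqrt n ≤ Δ := by
    have hfin : B / Real.sqrt n = T * h := by
      rw [hBval, hh, Real.sqrt_div (by positivity) n, mul_div_assoc]
    rw [hfin]
    calc T * h ≤ (Δ / h) * h := mul_le_mul_of_nonneg_right htan hhpos.le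
      _ = Δ := div_mul_cancel₀ Δ hhpos.ne'
  have hAn : A / Real.sqrt n = Real.sqrt ((∑ p ∈ P, a p ^ 2) / n) := by
    rw [hA_def, Real.sqrt_div (Finset.sum_nonneg fun p _ => sq_nonneg _) n]
  calc Real.sqrt ((∑ p ∈ P, infDist p (F' : Set E) ^ 2) / n)
      ≤ Real.sqrt ((∑ p ∈ P, (a p + b p) ^ 2) / n) :=
        Real.sqrt_le_sqrt (by gcongr)
    _ = Real.sqrt (∑ p ∈ P, (a p + b p) ^ 2) / Real.sqrt n := by
        rw [Real.sqrt_div (Finset.sum_nonneg fun p _ => sq_nonneg _) n]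
    _ ≤ (A + B) / Real.sqrt n := by
        gcongr
        exact sqrt_sum_sq_add_le P a b
    _ = A / Real.sqrt n + B / Real.sqrt n := by rw [add_div]
    _ ≤ Real.sqrt ((∑ p ∈ P, a p ^ 2) / n) + Δ := by
        rw [hAn]; exact add_le_add_right hBn _
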